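/- Let A be a dg-algebra, x_• a twisting sequence in A, and z ∈ A^{2s} a cochain with dz = a ∈ A^{2s+1}. Then there exists a twisting sequence x'_• homotopic to x_• with x'_{2i+1} = x_{2i+1} for all i < s and x'_{2s+1} = x_{2s+1} − a. -/

import Mathlib

/-- A differential graded algebra over `ℤ`. -/
structure DGA where
  A : Type
  [ringA : Ring A]
  grading : ℤ → AddSubgroup A
  mul_mem : ∀ {m n : ℤ} {a b : A}, a ∈ grading m → b ∈ grading n → a * b ∈ grading (m + n)
  d : A →+ A
  d_sq : ∀ a : A, d (d a) = 0
  d_mem : ∀ {m : ℤ} {a : A}, a ∈ grading m → d a ∈ grading (m + 1)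
  leibniz : ∀ {m : ℤ} {a : A}, a ∈ grading m → ∀ b : A,
      d (a * b) = d a * b + (((-1 : ℤˣ) ^ m : ℤˣ) : ℤ) • (a * d b)

attribute [instance] DGA.ringA

/-- A twisting sequence: `x n` is `x_{2n+1}` for `n ≥ 1`. -/
def IsTwistingSeq (G : DGA) (x : ℕ → G.A) : Prop :=
  x 0 = 0 ∧ (∀ n : ℕ, x n ∈ G.grading (2 * (n : ℤ) + 1)) ∧
    ∀ n : ℕ, 1 ≤ n →
      G.d (x n) + ∑ i ∈ Finset.Ioo 0 n, x i * x (n - i) = 0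

/-- A homotopy `h_•` from the twisting sequence `x_•` to the twisting sequence `y_•`. -/
def IsHomotopy (G : DGA) (x y h : ℕ → G.A) : Prop :=
  h 0 = 0 ∧ (∀ n : ℕ, h n ∈ G.grading (2 * (n : ℤ))) ∧
    ∀ n : ℕ, 1 ≤ n →
      y n - x n + G.d (h n) +
        ∑ i ∈ Finset.Ioo 0 n, (y (n - i) * h i - h i * x (n - i)) = 0

/-- Two twisting sequences are homotopic if there is a homotopy between them. -/
def Homotopic (G : DGA) (x y : ℕ → G.A) : Prop :=
  ∃ h : ℕ → G.A, IsHomotopy G x y h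

namespace TwistingAux

open PowerSeries Finset

/-- The coefficientwise differential on power series over `G.A`. -/
noncomputable def Dps (G : DGA) : PowerSeries G.A →+ PowerSeries G.A where
  toFun φ := PowerSeries.mk fun n => G.d (PowerSeries.coeff n φ)
  map_zero' := by ext n; simp
  map_add' φ ψ := by ext n; simp

lemma coeff_Dps (G : DGA) (φ : PowerSeries G.A) (n : ℕ) :
    PowerSeries.coeff n (Dps G φ) = G.d (PowerSeries.coeff n φ) := by
  simp [Dps]

lemma Dps_Dps (G : DGA) (φ : PowerSeries G.A) : Dps G (Dps G φ) = 0 := by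
  ext n; simp [Dps, G.d_sq]

lemma neg_one_zpow_even (i : ℕ) : ((-1 : ℤˣ) ^ (2 * (i : ℤ)) : ℤˣ) = 1 := by
  rw [zpow_mul]
  have h2 : ((-1 : ℤˣ) ^ (2 : ℤ)) = 1 := by decide
  rw [h2, one_zpow]

lemma neg_one_zpow_odd (i : ℕ) : ((-1 : ℤˣ) ^ (2 * (i : ℤ) + 1) : ℤˣ) = -1 := by
  rw [zpow_add, zpow_mul]
  have h2 : ((-1 : ℤˣ) ^ (2 : ℤ)) = 1 := by decide
  rw [h2, one_zpow, one_mul, zpow_one]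

lemma coeff_mul_Ioo (G : DGA) (f g : ℕ → G.A) (hf : f 0 = 0) (hg : g 0 = 0) (n : ℕ) :
    PowerSeries.coeff n (PowerSeries.mk f * PowerSeries.mk g) =
      ∑ i ∈ Finset.Ioo 0 n, f i * g (n - i) := by
  rw [PowerSeries.coeff_mul, Finset.Nat.sum_antidiagonal_eq_sum_range_succ_mk]
  simp only [PowerSeries.coeff_mk]
  refine (Finset.sum_subset ?_ ?_).symm
  · intro k hk
    simp only [Finset.mem_Ioo] at hk
    simp only [Finset.mem_range]
    omega
  · intro k hk hk'
    simp only [Finset.mem_range] at hk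
    simp only [Finset.mem_Ioo, not_and, not_lt] at hk'
    rcases Nat.eq_zero_or_pos k with h0 | h0
    · subst h0; rw [hf, zero_mul]
    · have : k = n := by omega
      subst this; rw [Nat.sub_self, hg, mul_zero]

lemma Dps_mul_even (G : DGA) (φ ψ : PowerSeries G.A)
    (hφ : ∀ n : ℕ, PowerSeries.coeff n φ ∈ G.grading (2 * (n : ℤ))) :
    Dps G (φ * ψ) = Dps G φ * ψ + φ * Dps G ψ := by
  ext n
  rw [coeff_Dps, map_add, PowerSeries.coeff_mul, PowerSeries.coeff_mul,
    PowerSeries.coeff_mul, map_sum, ← Finset.sum_add_distrib]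
  refine Finset.sum_congr rfl fun p _ => ?_
  rw [G.leibniz (hφ p.1) _, neg_one_zpow_even, Units.val_one, one_smul,
    coeff_Dps, coeff_Dps]

lemma Dps_mul_odd (G : DGA) (φ ψ : PowerSeries G.A)
    (hφ : ∀ n : ℕ, PowerSeries.coeff n φ ∈ G.grading (2 * (n : ℤ) + 1)) :
    Dps G (φ * ψ) = Dps G φ * ψ - φ * Dps G ψ := by
  ext n
  rw [coeff_Dps, map_sub, PowerSeries.coeff_mul, PowerSeries.coeff_mul,
    PowerSeries.coeff_mul, map_sum, ← Finset.sum_sub_distrib]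
  refine Finset.sum_congr rfl fun p _ => ?_
  rw [G.leibniz (hφ p.1) _, neg_one_zpow_odd, Units.val_neg, Units.val_one,
    neg_smul, one_smul, coeff_Dps, coeff_Dps, sub_eq_add_neg]

lemma sum_swap_Ioo {M : Type} [AddCommMonoid M] (n : ℕ) (F : ℕ → ℕ → M) :
    ∑ i ∈ Finset.Ioo 0 n, F i (n - i) = ∑ i ∈ Finset.Ioo 0 n, F (n - i) i := by
  refine Finset.sum_nbij' (fun i => n - i) (fun i => n - i) ?_ ?_ ?_ ?_ ?_ <;>
    intro a ha <;> simp only [Finset.mem_Ioo] at ha ⊢ <;>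
      first
        | omega
        | (congr 1 <;> omega)

lemma cancel (G : DGA) (Φ H : PowerSeries G.A) (h0 : PowerSeries.coeff 0 H = 0)
    (hΦ : Φ * (1 + H) = 0) : Φ = 0 := by
  ext n
  induction n using Nat.strong_induction_on with
  | _ n ih =>
    have h1 : PowerSeries.coeff n (Φ * (1 + H)) = 0 := by rw [hΦ]; simp
    rw [mul_add, mul_one, map_add, PowerSeries.coeff_mul] at h1
    have h2 : ∑ p ∈ Finset.HasAntidiagonal.antidiagonal n,
        PowerSeries.coeff p.1 Φ * PowerSeries.coeff p.2 H = 0 := by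
      refine Finset.sum_eq_zero fun p hp => ?_
      rcases Nat.eq_zero_or_pos p.2 with hp2 | hp2
      · have : PowerSeries.coeff p.2 H = 0 := by rw [hp2]; exact h0
        rw [this, mul_zero]
      · have hlt : p.1 < n := by
          have := Finset.HasAntidiagonal.mem_antidiagonal.mp hp; omega
        have := ih p.1 hlt
        rw [map_zero] at this
        rw [this, zero_mul]
    rw [h2, add_zero] at h1
    rw [h1, map_zero]

/-- The deformed sequence. -/
def seq (G : DGA) (x h : ℕ → G.A) : ℕ → G.A
  | n => x n - G.d (h n) - ∑ i ∈ (Finset.Ioo 0 n).attach,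
      (seq G x h (n - i.1) * h i.1 - h i.1 * x (n - i.1))
  termination_by n => n
  decreasing_by
    have := Finset.mem_Ioo.mp i.2; omega

lemma seq_eq (G : DGA) (x h : ℕ → G.A) (n : ℕ) :
    seq G x h n = x n - G.d (h n) -
      ∑ i ∈ Finset.Ioo 0 n, (seq G x h (n - i) * h i - h i * x (n - i)) := by
  rw [seq]
  congr 1
  exact Finset.sum_attach (Finset.Ioo 0 n)
    (fun i => seq G x h (n - i) * h i - h i * x (n - i))

end TwistingAux

/-- Given a twisting sequence `x_•` and a coboundary `a = dz` with
`z ∈ A^{2s}`, there is a twisting sequence `x'_•` homotopic to `x_•` which agrees with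
`x_•` in all degrees below `2s+1` and has `x'_{2s+1} = x_{2s+1} − a`. -/
theorem twisting_add_coboundary (G : DGA) (x : ℕ → G.A) (hx : IsTwistingSeq G x)
    (s : ℕ) (hs : 1 ≤ s) (z : G.A) (hz : z ∈ G.grading (2 * (s : ℤ))) :
    ∃ x' : ℕ → G.A, IsTwistingSeq G x' ∧ Homotopic G x x' ∧
      (∀ i : ℕ, i < s → x' i = x i) ∧ x' s = x s - G.d z := by
  classical
  obtain ⟨hx0, hxg, hxt⟩ := hx
  set h : ℕ → G.A := fun n => if n = s then z else 0 with hh_def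
  set y : ℕ → G.A := TwistingAux.seq G x h with hy_def
  have hyeq : ∀ n, y n = x n - G.d (h n) -
      ∑ i ∈ Finset.Ioo 0 n, (y (n - i) * h i - h i * x (n - i)) := by
    intro n; rw [hy_def]; exact TwistingAux.seq_eq G x h n
  have hh0 : h 0 = 0 := by simp only [hh_def]; rw [if_neg (by omega)]
  have hhg : ∀ n : ℕ, h n ∈ G.grading (2 * (n : ℤ)) := by
    intro n
    by_cases hn : n = s
    · subst hn; simp only [hh_def, if_pos rfl]; exact hz
    · simp only [hh_def, if_neg hn]; exact zero_mem _
  have hy0 : y 0 = 0 := by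
    rw [hyeq 0, hh0, map_zero, hx0]
    simp
  -- gradings of y
  have hyg : ∀ n : ℕ, y n ∈ G.grading (2 * (n : ℤ) + 1) := by
    intro n
    induction n using Nat.strong_induction_on with
    | _ n ih =>
      rw [hyeq n]
      refine sub_mem (sub_mem (hxg n) (G.d_mem (hhg n))) ?_
      refine AddSubgroup.sum_mem _ fun i hi => ?_
      obtain ⟨hi0, hin⟩ := Finset.mem_Ioo.mp hi
      refine sub_mem ?_ ?_
      · have h1 := G.mul_mem (ih (n - i) (by omega)) (hhg i)
        have e : 2 * ((n - i : ℕ) : ℤ) + 1 + 2 * (i : ℤ) = 2 * (n : ℤ) + 1 := by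
          have : ((n - i : ℕ) : ℤ) = (n : ℤ) - (i : ℤ) := by omega
          rw [this]; ring
        exact e ▸ h1
      · have h1 := G.mul_mem (hhg i) (ih (n - i) (by omega))
        have e : 2 * (i : ℤ) + (2 * ((n - i : ℕ) : ℤ) + 1) = 2 * (n : ℤ) + 1 := by
          have : ((n - i : ℕ) : ℤ) = (n : ℤ) - (i : ℤ) := by omega
          rw [this]; ring
        have h2 := G.mul_mem (hhg i) (hxg (n - i))
        exact e ▸ h2
  -- homotopy relation, coefficientwise
  have hrel : ∀ n : ℕ, 1 ≤ n → y n - x n + G.d (h n) +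
      ∑ i ∈ Finset.Ioo 0 n, (y (n - i) * h i - h i * x (n - i)) = 0 := by
    intro n _
    rw [hyeq n]
    abel
  -- agreement below s
  have hlt : ∀ i : ℕ, i < s → y i = x i := by
    intro i
    induction i using Nat.strong_induction_on with
    | _ i ih =>
      intro his
      have hhi : h i = 0 := by simp only [hh_def]; rw [if_neg (by omega)]
      have hsum : ∑ j ∈ Finset.Ioo 0 i, (y (i - j) * h j - h j * x (i - j)) = 0 := by
        refine Finset.sum_eq_zero fun j hj => ?_
        obtain ⟨hj0, hji⟩ := Finset.mem_Ioo.mp hj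
        have : h j = 0 := by simp only [hh_def]; rw [if_neg (by omega)]
        rw [this, mul_zero, zero_mul, sub_zero]
      rw [hyeq i, hhi, map_zero, sub_zero, hsum, sub_zero]
  -- value at s
  have hvs : y s = x s - G.d z := by
    have hhs : h s = z := by simp [hh_def]
    have hsum : ∑ j ∈ Finset.Ioo 0 s, (y (s - j) * h j - h j * x (s - j)) = 0 := by
      refine Finset.sum_eq_zero fun j hj => ?_
      obtain ⟨hj0, hjs⟩ := Finset.mem_Ioo.mp hj
      have : h j = 0 := by simp only [hh_def]; rw [if_neg (by omega)]
      rw [this, mul_zero, zero_mul, sub_zero]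
    rw [hyeq s, hhs, hsum, sub_zero]
  -- power series setup
  open TwistingAux in
  have hXg : ∀ n : ℕ, PowerSeries.coeff n (PowerSeries.mk x) ∈ G.grading (2 * (n : ℤ) + 1) := by
    intro n; rw [PowerSeries.coeff_mk]; exact hxg n
  have hYg : ∀ n : ℕ, PowerSeries.coeff n (PowerSeries.mk y) ∈ G.grading (2 * (n : ℤ) + 1) := by
    intro n; rw [PowerSeries.coeff_mk]; exact hyg n
  have hHg : ∀ n : ℕ, PowerSeries.coeff n (PowerSeries.mk h) ∈ G.grading (2 * (n : ℤ)) := by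
    intro n; rw [PowerSeries.coeff_mk]; exact hhg n
  have E1 : TwistingAux.Dps G (PowerSeries.mk x) = -(PowerSeries.mk x * PowerSeries.mk x) := by
    ext n
    rw [TwistingAux.coeff_Dps, map_neg, TwistingAux.coeff_mul_Ioo G x x hx0 hx0,
      PowerSeries.coeff_mk]
    rcases Nat.eq_zero_or_pos n with hn | hn
    · subst hn; simp [hx0]
    · exact eq_neg_of_add_eq_zero_left (hxt n hn)
  have E2 : PowerSeries.mk y - PowerSeries.mk x + TwistingAux.Dps G (PowerSeries.mk h) +
      PowerSeries.mk y * PowerSeries.mk h - PowerSeries.mk h * PowerSeries.mk x = 0 := by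
    ext n
    rw [map_sub, map_add, map_add, map_sub, TwistingAux.coeff_Dps,
      TwistingAux.coeff_mul_Ioo G y h hy0 hh0, TwistingAux.coeff_mul_Ioo G h x hh0 hx0,
      PowerSeries.coeff_mk, PowerSeries.coeff_mk, PowerSeries.coeff_mk, map_zero]
    rcases Nat.eq_zero_or_pos n with hn | hn
    · subst hn; simp [hy0, hx0, hh0]
    · have hthis := hrel n hn
      rw [Finset.sum_sub_distrib] at hthis
      have hswap : ∑ i ∈ Finset.Ioo 0 n, y i * h (n - i) =
          ∑ i ∈ Finset.Ioo 0 n, y (n - i) * h i :=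
        TwistingAux.sum_swap_Ioo n (fun a b => y a * h b)
      rw [hswap]
      calc y n - x n + G.d (h n) + ∑ i ∈ Finset.Ioo 0 n, y (n - i) * h i -
            ∑ i ∈ Finset.Ioo 0 n, h i * x (n - i)
          = y n - x n + G.d (h n) + (∑ i ∈ Finset.Ioo 0 n, y (n - i) * h i -
            ∑ i ∈ Finset.Ioo 0 n, h i * x (n - i)) := by abel
        _ = 0 := hthis
  have hDH : TwistingAux.Dps G (PowerSeries.mk h) =
      PowerSeries.mk x - PowerSeries.mk y + PowerSeries.mk h * PowerSeries.mk x -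
        PowerSeries.mk y * PowerSeries.mk h := by
    refine eq_of_sub_eq_zero ?_
    have e : TwistingAux.Dps G (PowerSeries.mk h) -
        (PowerSeries.mk x - PowerSeries.mk y + PowerSeries.mk h * PowerSeries.mk x -
          PowerSeries.mk y * PowerSeries.mk h) =
        PowerSeries.mk y - PowerSeries.mk x + TwistingAux.Dps G (PowerSeries.mk h) +
          PowerSeries.mk y * PowerSeries.mk h - PowerSeries.mk h * PowerSeries.mk x := by
      abel
    rw [e]; exact E2
  have hder := congrArg (TwistingAux.Dps G) E2
  rw [map_zero] at hder
  simp only [map_sub, map_add] at hder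
  rw [TwistingAux.Dps_Dps, TwistingAux.Dps_mul_odd G _ _ hYg,
    TwistingAux.Dps_mul_even G _ _ hHg, add_zero, hDH, E1] at hder
  have key : (TwistingAux.Dps G (PowerSeries.mk y) + PowerSeries.mk y * PowerSeries.mk y) *
      (1 + PowerSeries.mk h) =
      TwistingAux.Dps G (PowerSeries.mk y) - -(PowerSeries.mk x * PowerSeries.mk x) +
        (TwistingAux.Dps G (PowerSeries.mk y) * PowerSeries.mk h -
          PowerSeries.mk y * (PowerSeries.mk x - PowerSeries.mk y +
            PowerSeries.mk h * PowerSeries.mk x - PowerSeries.mk y * PowerSeries.mk h)) -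
        ((PowerSeries.mk x - PowerSeries.mk y + PowerSeries.mk h * PowerSeries.mk x -
            PowerSeries.mk y * PowerSeries.mk h) * PowerSeries.mk x +
          PowerSeries.mk h * -(PowerSeries.mk x * PowerSeries.mk x)) := by
    noncomm_ring
  have E3 : TwistingAux.Dps G (PowerSeries.mk y) + PowerSeries.mk y * PowerSeries.mk y = 0 := by
    refine TwistingAux.cancel G _ (PowerSeries.mk h) ?_ ?_
    · rw [PowerSeries.coeff_mk]; exact hh0
    · rw [key]; exact hder
  -- twisting relation for y
  have hyt : ∀ n : ℕ, 1 ≤ n →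
      G.d (y n) + ∑ i ∈ Finset.Ioo 0 n, y i * y (n - i) = 0 := by
    intro n _
    have := congrArg (PowerSeries.coeff n) E3
    rw [map_add, TwistingAux.coeff_Dps, PowerSeries.coeff_mk,
      TwistingAux.coeff_mul_Ioo G y y hy0 hy0, map_zero] at this
    exact this
  exact ⟨y, ⟨hy0, hyg, hyt⟩, ⟨h, hh0, hhg, hrel⟩, hlt, hvs⟩
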